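/- For the Lagrange basis of the five/six-point stencil, A(x_{ij},τ)φ₀₀ = 1 - 2λ², A(x_{ij},τ)φ₋₁,₋₁ = 0, and A(x_{ij},τ)φ_{±1,0} = A(x_{ij},τ)φ_{0,±1} = λ²/2, where λ = cτ/h. -/

import Mathlib

open MeasureTheory

/-- The operator A(x,τ)f = (1/2π) ∫_{|z|<1} [f(x+cτz) + cτ ∇f(x+cτz)·z]/√(1-|z|²) dz. -/
noncomputable def Aop (c τ : ℝ) (x : ℝ × ℝ) (f : ℝ × ℝ → ℝ) : ℝ :=
  (1 / (2 * Real.pi)) * ∫ z in {z : ℝ × ℝ | z.1 ^ 2 + z.2 ^ 2 < 1},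
    (f (x.1 + c * τ * z.1, x.2 + c * τ * z.2) +
      c * τ * fderiv ℝ f (x.1 + c * τ * z.1, x.2 + c * τ * z.2) z) /
      Real.sqrt (1 - (z.1 ^ 2 + z.2 ^ 2))

/-- The six Lagrange basis functions of the five/six-point stencil. -/
noncomputable def phi5 (h : ℝ) (q : ℤ × ℤ) (x : ℝ × ℝ) : ℝ :=
  if q = (0, 0) then 1 + x.1 * x.2 / h ^ 2 - x.1 ^ 2 / h ^ 2 - x.2 ^ 2 / h ^ 2
  else if q = (-1, 0) then -x.1 / (2 * h) - x.1 * x.2 / h ^ 2 + x.1 ^ 2 / (2 * h ^ 2)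
  else if q = (0, -1) then -x.2 / (2 * h) - x.1 * x.2 / h ^ 2 + x.2 ^ 2 / (2 * h ^ 2)
  else if q = (-1, -1) then x.1 * x.2 / h ^ 2
  else if q = (1, 0) then x.1 / (2 * h) + x.1 ^ 2 / (2 * h ^ 2)
  else if q = (0, 1) then x.2 / (2 * h) + x.2 ^ 2 / (2 * h ^ 2)
  else 0

section Aux

open Real Set intervalIntegral


lemma sqrt_pos_of_lt_one {r : ℝ} (h1 : r < 1) (h2 : -1 < r) : 0 < Real.sqrt (1 - r^2) := by
  apply Real.sqrt_pos.2; nlinarith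

lemma hasDeriv_G1 {r : ℝ} (hr : r ∈ Ioo (0:ℝ) 1) :
    HasDerivAt (fun t : ℝ => -Real.sqrt (1 - t^2)) (r / Real.sqrt (1 - r^2)) r := by
  have h1 : (0:ℝ) < 1 - r^2 := by nlinarith [hr.1, hr.2]
  have hs : HasDerivAt (fun t : ℝ => 1 - t^2) (-(2*r)) r := by
    simpa using ((hasDerivAt_pow 2 r).const_sub 1)
  have := (Real.hasDerivAt_sqrt h1.ne').comp r hs
  have h2 := this.neg
  refine h2.congr_deriv ?_
  have hs0 : Real.sqrt (1 - r^2) ≠ 0 := (Real.sqrt_pos.2 h1).ne'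
  field_simp

lemma contG1 : Continuous (fun t : ℝ => -Real.sqrt (1 - t^2)) := by
  continuity

lemma R1_int : IntegrableOn (fun r : ℝ => r / Real.sqrt (1 - r^2)) (Ioo 0 1) := by
  have := integrableOn_deriv_of_nonneg (g := fun t : ℝ => -Real.sqrt (1 - t^2))
    (g' := fun r : ℝ => r / Real.sqrt (1 - r^2)) (a := 0) (b := 1)
    contG1.continuousOn (fun x hx => hasDeriv_G1 hx)
    (fun x hx => div_nonneg hx.1.le (Real.sqrt_nonneg _))
  exact this.mono_set Ioo_subset_Ioc_self

lemma R1_val : ∫ r in Ioo (0:ℝ) 1, r / Real.sqrt (1 - r^2) = 1 := by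
  have hint : IntervalIntegrable (fun r : ℝ => r / Real.sqrt (1 - r^2)) volume 0 1 := by
    rw [intervalIntegrable_iff_integrableOn_Ioo_of_le (by norm_num)]
    exact R1_int
  have := integral_eq_sub_of_hasDeriv_right_of_le (by norm_num : (0:ℝ) ≤ 1)
    contG1.continuousOn (fun x hx => (hasDeriv_G1 hx).hasDerivWithinAt) hint
  rw [intervalIntegral.integral_of_le (by norm_num : (0:ℝ) ≤ 1),
    MeasureTheory.integral_Ioc_eq_integral_Ioo] at this
  simpa using this

noncomputable def G3 : ℝ → ℝ := fun t => -Real.sqrt (1 - t^2) + (1/3) * ((1 - t^2) * Real.sqrt (1 - t^2))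

lemma contG3 : Continuous G3 := by unfold G3; continuity

lemma hasDeriv_G3 {r : ℝ} (hr : r ∈ Ioo (0:ℝ) 1) :
    HasDerivAt G3 (r^3 / Real.sqrt (1 - r^2)) r := by
  have h1 : (0:ℝ) < 1 - r^2 := by nlinarith [hr.1, hr.2]
  have hs0 : Real.sqrt (1 - r^2) ≠ 0 := (Real.sqrt_pos.2 h1).ne'
  have hu : HasDerivAt (fun t : ℝ => 1 - t^2) (-(2*r)) r := by
    simpa using ((hasDerivAt_pow 2 r).const_sub 1)
  have hsq : HasDerivAt (fun t : ℝ => Real.sqrt (1 - t^2)) (1 / (2 * Real.sqrt (1 - r^2)) * (-(2*r))) r :=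
    (Real.hasDerivAt_sqrt h1.ne').comp r hu
  have hprod := hu.mul hsq
  have H := hsq.neg.add (hprod.const_mul (1/3 : ℝ))
  refine H.congr_deriv ?_
  have hss2 : Real.sqrt (1 - r^2) ^ 2 = 1 - r^2 := Real.sq_sqrt h1.le
  field_simp
  linear_combination (-2*r) * hss2

lemma R3_int : IntegrableOn (fun r : ℝ => r^3 / Real.sqrt (1 - r^2)) (Ioo 0 1) := by
  have := integrableOn_deriv_of_nonneg (g := G3)
    (g' := fun r : ℝ => r^3 / Real.sqrt (1 - r^2)) (a := 0) (b := 1)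
    contG3.continuousOn (fun x hx => hasDeriv_G3 hx)
    (fun x hx => div_nonneg (pow_nonneg hx.1.le 3) (Real.sqrt_nonneg _))
  exact this.mono_set Ioo_subset_Ioc_self

lemma R3_val : ∫ r in Ioo (0:ℝ) 1, r^3 / Real.sqrt (1 - r^2) = 2/3 := by
  have hint : IntervalIntegrable (fun r : ℝ => r^3 / Real.sqrt (1 - r^2)) volume 0 1 := by
    rw [intervalIntegrable_iff_integrableOn_Ioo_of_le (by norm_num)]
    exact R3_int
  have := integral_eq_sub_of_hasDeriv_right_of_le (by norm_num : (0:ℝ) ≤ 1)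
    contG3.continuousOn (fun x hx => (hasDeriv_G3 hx).hasDerivWithinAt) hint
  rw [intervalIntegral.integral_of_le (by norm_num : (0:ℝ) ≤ 1),
    MeasureTheory.integral_Ioc_eq_integral_Ioo] at this
  rw [this]
  simp [G3]
  norm_num

lemma R2_int : IntegrableOn (fun r : ℝ => r^2 / Real.sqrt (1 - r^2)) (Ioo 0 1) := by
  apply R1_int.mono'
  · apply ContinuousOn.aestronglyMeasurable _ measurableSet_Ioo
    apply ContinuousOn.div (by fun_prop) (by fun_prop)
    intro x hx
    exact (Real.sqrt_pos.2 (by nlinarith [hx.1, hx.2])).ne'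
  · filter_upwards [ae_restrict_mem measurableSet_Ioo] with x hx
    rw [Real.norm_eq_abs, abs_div, abs_of_nonneg (by positivity), abs_of_nonneg (Real.sqrt_nonneg _)]
    gcongr
    · nlinarith [hx.1, hx.2]


lemma ioo_eq_interval (g : ℝ → ℝ) :
    ∫ θ in Ioo (-π) π, g θ = ∫ θ in (-π)..π, g θ := by
  rw [intervalIntegral.integral_of_le (by linarith [Real.pi_pos] : -π ≤ π),
    MeasureTheory.integral_Ioc_eq_integral_Ioo]

lemma ang_one : ∫ θ in Ioo (-π) π, (1:ℝ) = 2*π := by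
  rw [ioo_eq_interval]; simp; ring

lemma ang_cos : ∫ θ in Ioo (-π) π, Real.cos θ = 0 := by
  rw [ioo_eq_interval]; simp

lemma ang_sin : ∫ θ in Ioo (-π) π, Real.sin θ = 0 := by
  rw [ioo_eq_interval]; simp

lemma ang_sincos : ∫ θ in Ioo (-π) π, Real.sin θ * Real.cos θ = 0 := by
  rw [ioo_eq_interval]
  have h : ∀ θ : ℝ, HasDerivAt (fun t => Real.sin t ^ 2 / 2) (Real.sin θ * Real.cos θ) θ := by
    intro θ
    have := ((Real.hasDerivAt_sin θ).pow 2).div_const 2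
    refine this.congr_deriv ?_
    norm_num
    ring
  rw [intervalIntegral.integral_eq_sub_of_hasDerivAt (fun x _ => h x)
    ((continuous_sin.mul continuous_cos).intervalIntegrable _ _)]
  simp

lemma ang_cossq : ∫ θ in Ioo (-π) π, Real.cos θ ^ 2 = π := by
  rw [ioo_eq_interval, integral_cos_sq]
  simp

lemma ang_sinsq : ∫ θ in Ioo (-π) π, Real.sin θ ^ 2 = π := by
  rw [ioo_eq_interval, integral_sin_sq]
  simp

lemma hS : MeasurableSet {z : ℝ × ℝ | z.1 ^ 2 + z.2 ^ 2 < 1} :=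
  measurableSet_lt (by fun_prop) measurable_const

lemma polar_disk (G : ℝ × ℝ → ℝ) :
    ∫ z in {z : ℝ × ℝ | z.1 ^ 2 + z.2 ^ 2 < 1}, G z
      = ∫ p in Ioo (0:ℝ) 1 ×ˢ Ioo (-π) π, p.1 * G (p.1 * Real.cos p.2, p.1 * Real.sin p.2) := by
  have h := integral_comp_polarCoord_symm (({z : ℝ × ℝ | z.1 ^ 2 + z.2 ^ 2 < 1}).indicator G)
  rw [MeasureTheory.integral_indicator hS] at h
  rw [← h, polarCoord_target]
  have key : ∀ p ∈ (Ioi (0:ℝ) ×ˢ Ioo (-π) π),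
      p.1 • ({z : ℝ × ℝ | z.1 ^ 2 + z.2 ^ 2 < 1}).indicator G (polarCoord.symm p)
        = (Ioo (0:ℝ) 1 ×ˢ Ioo (-π) π).indicator
            (fun p => p.1 * G (p.1 * Real.cos p.2, p.1 * Real.sin p.2)) p := by
    rintro ⟨r, θ⟩ ⟨hr, hθ⟩
    simp only [mem_Ioi] at hr
    have hmem : polarCoord.symm (r, θ) ∈ {z : ℝ × ℝ | z.1 ^ 2 + z.2 ^ 2 < 1} ↔ r < 1 := by
      simp only [polarCoord_symm_apply, mem_setOf_eq]
      have hrr : (r * Real.cos θ) ^ 2 + (r * Real.sin θ) ^ 2 = r ^ 2 := by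
        linear_combination r ^ 2 * (Real.sin_sq_add_cos_sq θ)
      rw [hrr]
      constructor
      · intro hlt; nlinarith
      · intro hlt; nlinarith
    by_cases h1 : r < 1
    · rw [Set.indicator_of_mem (hmem.2 h1), Set.indicator_of_mem (by exact ⟨⟨hr, h1⟩, hθ⟩)]
      simp [polarCoord_symm_apply, smul_eq_mul]
    · rw [Set.indicator_of_notMem (fun hx => h1 (hmem.1 hx)),
        Set.indicator_of_notMem (fun hx => h1 hx.1.2)]
      simp
  rw [MeasureTheory.setIntegral_congr_fun ((measurableSet_Ioi.prod measurableSet_Ioo)) key,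
    MeasureTheory.setIntegral_indicator ((measurableSet_Ioo.prod measurableSet_Ioo))]
  congr 1
  rw [Set.inter_eq_self_of_subset_right]
  exact Set.prod_mono_left Ioo_subset_Ioi_self

lemma master (α β γ δ ε ζ : ℝ) :
    ∫ z in {z : ℝ × ℝ | z.1 ^ 2 + z.2 ^ 2 < 1},
      (α + β * z.1 + γ * z.2 + δ * (z.1 * z.2) + ε * z.1 ^ 2 + ζ * z.2 ^ 2)
          / Real.sqrt (1 - (z.1 ^ 2 + z.2 ^ 2))
      = 2 * π * α + (2 * π / 3) * (ε + ζ) := by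
  rw [polar_disk]
  have key : ∀ p ∈ (Ioo (0:ℝ) 1 ×ˢ Ioo (-π) π),
      p.1 * ((α + β * (p.1 * Real.cos p.2) + γ * (p.1 * Real.sin p.2)
          + δ * ((p.1 * Real.cos p.2) * (p.1 * Real.sin p.2))
          + ε * (p.1 * Real.cos p.2) ^ 2 + ζ * (p.1 * Real.sin p.2) ^ 2)
        / Real.sqrt (1 - ((p.1 * Real.cos p.2) ^ 2 + (p.1 * Real.sin p.2) ^ 2)))
      = α * ((p.1 / Real.sqrt (1 - p.1 ^ 2)) * 1)
        + β * ((p.1 ^ 2 / Real.sqrt (1 - p.1 ^ 2)) * Real.cos p.2)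
        + γ * ((p.1 ^ 2 / Real.sqrt (1 - p.1 ^ 2)) * Real.sin p.2)
        + δ * ((p.1 ^ 3 / Real.sqrt (1 - p.1 ^ 2)) * (Real.sin p.2 * Real.cos p.2))
        + ε * ((p.1 ^ 3 / Real.sqrt (1 - p.1 ^ 2)) * Real.cos p.2 ^ 2)
        + ζ * ((p.1 ^ 3 / Real.sqrt (1 - p.1 ^ 2)) * Real.sin p.2 ^ 2) := by
    rintro ⟨r, θ⟩ _
    have hrr : (r * Real.cos θ) ^ 2 + (r * Real.sin θ) ^ 2 = r ^ 2 := by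
      linear_combination r ^ 2 * (Real.sin_sq_add_cos_sq θ)
    simp only [hrr]
    ring
  rw [MeasureTheory.setIntegral_congr_fun (measurableSet_Ioo.prod measurableSet_Ioo) key]
  have hvol : (volume : Measure (ℝ × ℝ)).restrict (Ioo (0:ℝ) 1 ×ˢ Ioo (-π) π)
      = (volume.restrict (Ioo (0:ℝ) 1)).prod (volume.restrict (Ioo (-π) π)) := by
    rw [Measure.prod_restrict, ← Measure.volume_eq_prod]
  rw [hvol]
  have hgcont : ∀ g : ℝ → ℝ, Continuous g → Integrable g (volume.restrict (Ioo (-π) π)) :=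
    fun g hg => (hg.integrableOn_Icc).mono_set Ioo_subset_Icc_self
  have i1 : Integrable (fun p : ℝ × ℝ => (p.1 / Real.sqrt (1 - p.1 ^ 2)) * (1:ℝ))
      ((volume.restrict (Ioo (0:ℝ) 1)).prod (volume.restrict (Ioo (-π) π))) :=
    Integrable.mul_prod R1_int (hgcont _ continuous_const)
  have i2 : Integrable (fun p : ℝ × ℝ => (p.1 ^ 2 / Real.sqrt (1 - p.1 ^ 2)) * Real.cos p.2)
      ((volume.restrict (Ioo (0:ℝ) 1)).prod (volume.restrict (Ioo (-π) π))) :=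
    Integrable.mul_prod R2_int (hgcont _ Real.continuous_cos)
  have i3 : Integrable (fun p : ℝ × ℝ => (p.1 ^ 2 / Real.sqrt (1 - p.1 ^ 2)) * Real.sin p.2)
      ((volume.restrict (Ioo (0:ℝ) 1)).prod (volume.restrict (Ioo (-π) π))) :=
    Integrable.mul_prod R2_int (hgcont _ Real.continuous_sin)
  have i4 : Integrable (fun p : ℝ × ℝ => (p.1 ^ 3 / Real.sqrt (1 - p.1 ^ 2)) * (Real.sin p.2 * Real.cos p.2))
      ((volume.restrict (Ioo (0:ℝ) 1)).prod (volume.restrict (Ioo (-π) π))) :=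
    Integrable.mul_prod R3_int (hgcont _ (Real.continuous_sin.mul Real.continuous_cos))
  have i5 : Integrable (fun p : ℝ × ℝ => (p.1 ^ 3 / Real.sqrt (1 - p.1 ^ 2)) * Real.cos p.2 ^ 2)
      ((volume.restrict (Ioo (0:ℝ) 1)).prod (volume.restrict (Ioo (-π) π))) :=
    Integrable.mul_prod R3_int (hgcont _ (Real.continuous_cos.pow 2))
  have i6 : Integrable (fun p : ℝ × ℝ => (p.1 ^ 3 / Real.sqrt (1 - p.1 ^ 2)) * Real.sin p.2 ^ 2)
      ((volume.restrict (Ioo (0:ℝ) 1)).prod (volume.restrict (Ioo (-π) π))) :=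
    Integrable.mul_prod R3_int (hgcont _ (Real.continuous_sin.pow 2))
  set μp := (volume.restrict (Ioo (0:ℝ) 1)).prod (volume.restrict (Ioo (-π) π)) with hμp
  have I1 := i1.const_mul α
  have I2 := i2.const_mul β
  have I3 := i3.const_mul γ
  have I4 := i4.const_mul δ
  have I5 := i5.const_mul ε
  have I6 := i6.const_mul ζ
  have I12 : Integrable (fun x : ℝ × ℝ => α * (x.1 / Real.sqrt (1 - x.1 ^ 2) * 1)
      + β * (x.1 ^ 2 / Real.sqrt (1 - x.1 ^ 2) * Real.cos x.2)) μp := I1.add I2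
  have I123 : Integrable (fun x : ℝ × ℝ => α * (x.1 / Real.sqrt (1 - x.1 ^ 2) * 1)
      + β * (x.1 ^ 2 / Real.sqrt (1 - x.1 ^ 2) * Real.cos x.2)
      + γ * (x.1 ^ 2 / Real.sqrt (1 - x.1 ^ 2) * Real.sin x.2)) μp := I12.add I3
  have I1234 : Integrable (fun x : ℝ × ℝ => α * (x.1 / Real.sqrt (1 - x.1 ^ 2) * 1)
      + β * (x.1 ^ 2 / Real.sqrt (1 - x.1 ^ 2) * Real.cos x.2)
      + γ * (x.1 ^ 2 / Real.sqrt (1 - x.1 ^ 2) * Real.sin x.2)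
      + δ * (x.1 ^ 3 / Real.sqrt (1 - x.1 ^ 2) * (Real.sin x.2 * Real.cos x.2))) μp := I123.add I4
  have I12345 : Integrable (fun x : ℝ × ℝ => α * (x.1 / Real.sqrt (1 - x.1 ^ 2) * 1)
      + β * (x.1 ^ 2 / Real.sqrt (1 - x.1 ^ 2) * Real.cos x.2)
      + γ * (x.1 ^ 2 / Real.sqrt (1 - x.1 ^ 2) * Real.sin x.2)
      + δ * (x.1 ^ 3 / Real.sqrt (1 - x.1 ^ 2) * (Real.sin x.2 * Real.cos x.2))
      + ε * (x.1 ^ 3 / Real.sqrt (1 - x.1 ^ 2) * Real.cos x.2 ^ 2)) μp := I1234.add I5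
  rw [MeasureTheory.integral_add I12345 I6,
    MeasureTheory.integral_add I1234 I5,
    MeasureTheory.integral_add I123 I4,
    MeasureTheory.integral_add I12 I3,
    MeasureTheory.integral_add I1 I2,
    MeasureTheory.integral_const_mul, MeasureTheory.integral_const_mul,
    MeasureTheory.integral_const_mul, MeasureTheory.integral_const_mul,
    MeasureTheory.integral_const_mul, MeasureTheory.integral_const_mul]
  rw [hμp]
  have P1 : ∫ (a : ℝ × ℝ), a.1 / Real.sqrt (1 - a.1 ^ 2) * 1
        ∂((volume.restrict (Ioo (0:ℝ) 1)).prod (volume.restrict (Ioo (-π) π)))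
      = (∫ r in Ioo (0:ℝ) 1, r / Real.sqrt (1 - r ^ 2)) * ∫ θ in Ioo (-π) π, (1:ℝ) :=
    MeasureTheory.integral_prod_mul (fun r : ℝ => r / Real.sqrt (1 - r ^ 2)) (fun _ : ℝ => (1:ℝ))
  have P2 : ∫ (a : ℝ × ℝ), a.1 ^ 2 / Real.sqrt (1 - a.1 ^ 2) * Real.cos a.2
        ∂((volume.restrict (Ioo (0:ℝ) 1)).prod (volume.restrict (Ioo (-π) π)))
      = (∫ r in Ioo (0:ℝ) 1, r ^ 2 / Real.sqrt (1 - r ^ 2)) * ∫ θ in Ioo (-π) π, Real.cos θ :=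
    MeasureTheory.integral_prod_mul (fun r : ℝ => r ^ 2 / Real.sqrt (1 - r ^ 2)) (fun θ : ℝ => Real.cos θ)
  have P3 : ∫ (a : ℝ × ℝ), a.1 ^ 2 / Real.sqrt (1 - a.1 ^ 2) * Real.sin a.2
        ∂((volume.restrict (Ioo (0:ℝ) 1)).prod (volume.restrict (Ioo (-π) π)))
      = (∫ r in Ioo (0:ℝ) 1, r ^ 2 / Real.sqrt (1 - r ^ 2)) * ∫ θ in Ioo (-π) π, Real.sin θ :=
    MeasureTheory.integral_prod_mul (fun r : ℝ => r ^ 2 / Real.sqrt (1 - r ^ 2)) (fun θ : ℝ => Real.sin θ)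
  have P4 : ∫ (a : ℝ × ℝ), a.1 ^ 3 / Real.sqrt (1 - a.1 ^ 2) * (Real.sin a.2 * Real.cos a.2)
        ∂((volume.restrict (Ioo (0:ℝ) 1)).prod (volume.restrict (Ioo (-π) π)))
      = (∫ r in Ioo (0:ℝ) 1, r ^ 3 / Real.sqrt (1 - r ^ 2)) * ∫ θ in Ioo (-π) π, Real.sin θ * Real.cos θ :=
    MeasureTheory.integral_prod_mul (fun r : ℝ => r ^ 3 / Real.sqrt (1 - r ^ 2)) (fun θ : ℝ => Real.sin θ * Real.cos θ)
  have P5 : ∫ (a : ℝ × ℝ), a.1 ^ 3 / Real.sqrt (1 - a.1 ^ 2) * Real.cos a.2 ^ 2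
        ∂((volume.restrict (Ioo (0:ℝ) 1)).prod (volume.restrict (Ioo (-π) π)))
      = (∫ r in Ioo (0:ℝ) 1, r ^ 3 / Real.sqrt (1 - r ^ 2)) * ∫ θ in Ioo (-π) π, Real.cos θ ^ 2 :=
    MeasureTheory.integral_prod_mul (fun r : ℝ => r ^ 3 / Real.sqrt (1 - r ^ 2)) (fun θ : ℝ => Real.cos θ ^ 2)
  have P6 : ∫ (a : ℝ × ℝ), a.1 ^ 3 / Real.sqrt (1 - a.1 ^ 2) * Real.sin a.2 ^ 2
        ∂((volume.restrict (Ioo (0:ℝ) 1)).prod (volume.restrict (Ioo (-π) π)))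
      = (∫ r in Ioo (0:ℝ) 1, r ^ 3 / Real.sqrt (1 - r ^ 2)) * ∫ θ in Ioo (-π) π, Real.sin θ ^ 2 :=
    MeasureTheory.integral_prod_mul (fun r : ℝ => r ^ 3 / Real.sqrt (1 - r ^ 2)) (fun θ : ℝ => Real.sin θ ^ 2)
  rw [P1, P2, P3, P4, P5, P6, R1_val, R3_val, ang_one, ang_cos, ang_sin, ang_sincos, ang_cossq, ang_sinsq]
  ring


noncomputable def quadF (a b c d e g : ℝ) : ℝ × ℝ → ℝ :=
  fun x => a + b * x.1 + c * x.2 + d * (x.1 * x.2) + e * (x.1 * x.1) + g * (x.2 * x.2)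

lemma hasFDerivAt_quadF (a b c d e g : ℝ) (p : ℝ × ℝ) :
    HasFDerivAt (quadF a b c d e g)
      ((b + d * p.2 + 2 * e * p.1) • ContinuousLinearMap.fst ℝ ℝ ℝ
        + (c + d * p.1 + 2 * g * p.2) • ContinuousLinearMap.snd ℝ ℝ ℝ) p := by
  have h1 : HasFDerivAt (fun x : ℝ × ℝ => x.1) (ContinuousLinearMap.fst ℝ ℝ ℝ) p := hasFDerivAt_fst
  have h2 : HasFDerivAt (fun x : ℝ × ℝ => x.2) (ContinuousLinearMap.snd ℝ ℝ ℝ) p := hasFDerivAt_snd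
  have H := (((((h1.const_mul b).const_add a).add (h2.const_mul c)).add
      ((h1.mul h2).const_mul d)).add ((h1.mul h1).const_mul e)).add ((h2.mul h2).const_mul g)
  refine H.congr_fderiv ?_
  refine ContinuousLinearMap.ext fun z => ?_
  simp only [ContinuousLinearMap.add_apply, ContinuousLinearMap.smul_apply,
    ContinuousLinearMap.coe_fst', ContinuousLinearMap.coe_snd', smul_eq_mul, pow_one]
  ring

lemma fderiv_quadF_apply (a b c d e g : ℝ) (p z : ℝ × ℝ) :
    fderiv ℝ (quadF a b c d e g) p z
      = (b + d * p.2 + 2 * e * p.1) * z.1 + (c + d * p.1 + 2 * g * p.2) * z.2 := by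
  rw [(hasFDerivAt_quadF a b c d e g p).fderiv]
  simp only [ContinuousLinearMap.add_apply, ContinuousLinearMap.smul_apply,
    ContinuousLinearMap.coe_fst', ContinuousLinearMap.coe_snd', smul_eq_mul]

lemma Aop_quadF (c τ A B C D E G : ℝ) :
    Aop c τ (0, 0) (quadF A B C D E G) = A + (c * τ) ^ 2 * (E + G) := by
  have key : ∀ z ∈ {z : ℝ × ℝ | z.1 ^ 2 + z.2 ^ 2 < 1},
      (quadF A B C D E G (0 + c * τ * z.1, 0 + c * τ * z.2) +
          c * τ * fderiv ℝ (quadF A B C D E G) (0 + c * τ * z.1, 0 + c * τ * z.2) z) /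
        Real.sqrt (1 - (z.1 ^ 2 + z.2 ^ 2))
      = ((A : ℝ) + (2 * (B * (c * τ))) * z.1 + (2 * (C * (c * τ))) * z.2
          + (3 * (D * (c * τ) ^ 2)) * (z.1 * z.2) + (3 * (E * (c * τ) ^ 2)) * z.1 ^ 2
          + (3 * (G * (c * τ) ^ 2)) * z.2 ^ 2) / Real.sqrt (1 - (z.1 ^ 2 + z.2 ^ 2)) := by
    intro z _
    rw [fderiv_quadF_apply]
    simp only [quadF]
    ring_nf
  simp only [Aop]
  rw [MeasureTheory.setIntegral_congr_fun hS key,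
    master A (2 * (B * (c * τ))) (2 * (C * (c * τ))) (3 * (D * (c * τ) ^ 2))
      (3 * (E * (c * τ) ^ 2)) (3 * (G * (c * τ) ^ 2))]
  have hπ : (π : ℝ) ≠ 0 := Real.pi_ne_zero
  field_simp

end Aux

/-- Values of A on the Lagrange basis of the five/six-point stencil, λ = cτ/h. -/
theorem Aop_phi5 (c τ h : ℝ) (hc : 0 < c) (hτ : 0 < τ) (hh : 0 < h) :
    Aop c τ (0, 0) (phi5 h (0, 0)) = 1 - 2 * (c * τ / h) ^ 2 ∧
    Aop c τ (0, 0) (phi5 h (-1, -1)) = 0 ∧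
    Aop c τ (0, 0) (phi5 h (1, 0)) = (c * τ / h) ^ 2 / 2 ∧
    Aop c τ (0, 0) (phi5 h (-1, 0)) = (c * τ / h) ^ 2 / 2 ∧
    Aop c τ (0, 0) (phi5 h (0, 1)) = (c * τ / h) ^ 2 / 2 ∧
    Aop c τ (0, 0) (phi5 h (0, -1)) = (c * τ / h) ^ 2 / 2 := by
  have hh2 : (h : ℝ) ^ 2 ≠ 0 := by positivity
  have e00 : phi5 h (0, 0) = quadF 1 0 0 (1 / h ^ 2) (-(1 / h ^ 2)) (-(1 / h ^ 2)) := by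
    funext x; simp only [phi5, quadF]; norm_num; ring
  have emm : phi5 h (-1, -1) = quadF 0 0 0 (1 / h ^ 2) 0 0 := by
    funext x; simp only [phi5, quadF]; norm_num; ring
  have epo : phi5 h (1, 0) = quadF 0 (1 / (2 * h)) 0 0 (1 / (2 * h ^ 2)) 0 := by
    funext x; simp only [phi5, quadF]; norm_num; ring
  have emo : phi5 h (-1, 0) = quadF 0 (-(1 / (2 * h))) 0 (-(1 / h ^ 2)) (1 / (2 * h ^ 2)) 0 := by
    funext x; simp only [phi5, quadF]; norm_num; ring
  have eop : phi5 h (0, 1) = quadF 0 0 (1 / (2 * h)) 0 0 (1 / (2 * h ^ 2)) := by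
    funext x; simp only [phi5, quadF]; norm_num; ring
  have eom : phi5 h (0, -1) = quadF 0 0 (-(1 / (2 * h))) (-(1 / h ^ 2)) 0 (1 / (2 * h ^ 2)) := by
    funext x; simp only [phi5, quadF]; norm_num; ring
  refine ⟨?_, ?_, ?_, ?_, ?_, ?_⟩
  · rw [e00, Aop_quadF]; field_simp; ring
  · rw [emm, Aop_quadF]; ring
  · rw [epo, Aop_quadF]; field_simp; ring
  · rw [emo, Aop_quadF]; field_simp; ring
  · rw [eop, Aop_quadF]; field_simp; ring
  · rw [eom, Aop_quadF]; field_simp; ring
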